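/- There are no isometric zero-divisors in S^2: there is no nonconstant g ∈ S^2 vanishing on a nonempty zero-set {z_k} ⊂ D such that f/g ∈ S^2 and ‖f/g‖_{S^2} = ‖f‖_{S^2} for every f ∈ S^2 vanishing on {z_k}. -/

import Mathlib

open Metric Filter

noncomputable def taylorCoeff (f : ℂ → ℂ) (n : ℕ) : ℂ :=
  iteratedDeriv n f 0 / n.factorial

/-- Membership in `S²`: `f` is analytic on the open unit disk, equals its Taylor
series there, and its coefficients satisfy `Σ n² |a n|² < ∞`. -/
def MemS2 (f : ℂ → ℂ) : Prop :=
  AnalyticOn ℂ f (ball (0:ℂ) 1) ∧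
  (∀ z ∈ ball (0:ℂ) 1, HasSum (fun n : ℕ => taylorCoeff f n * z ^ n) (f z)) ∧
  Summable (fun n : ℕ => ((n : ℝ))^2 * ‖taylorCoeff f n‖^2)

/-- The square of the `S²` norm: `|a₀|² + Σ_{n≥1} n² |aₙ|²`. -/
noncomputable def s2NormSq (f : ℂ → ℂ) : ℝ :=
  ‖taylorCoeff f 0‖^2 + ∑' n : ℕ, ((n : ℝ) + 1)^2 * ‖taylorCoeff f (n+1)‖^2

noncomputable def s2Norm (f : ℂ → ℂ) : ℝ := Real.sqrt (s2NormSq f)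

/-- The square of the `H²` norm, in terms of Taylor coefficients. -/
noncomputable def h2NormSq (f : ℂ → ℂ) : ℝ := ∑' n : ℕ, ‖taylorCoeff f n‖^2

noncomputable def h2Norm (f : ℂ → ℂ) : ℝ := Real.sqrt (h2NormSq f)

/-- An operator on functions is bounded on `S²`. -/
def BoundedOpS2 (T : (ℂ → ℂ) → (ℂ → ℂ)) : Prop :=
  (∀ f, MemS2 f → MemS2 (T f)) ∧
  ∃ C : ℝ, ∀ f, MemS2 f → s2Norm (T f) ≤ C * s2Norm f

/-- The operator norm of an operator on `S²`. -/
noncomputable def opNormS2 (T : (ℂ → ℂ) → (ℂ → ℂ)) : ℝ :=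
  sInf {C : ℝ | 0 ≤ C ∧ ∀ f, MemS2 f → s2Norm (T f) ≤ C * s2Norm f}

/-- An (analytic) automorphism of the unit disk. -/
def IsDiskAut (φ : ℂ → ℂ) : Prop :=
  AnalyticOn ℂ φ (ball (0:ℂ) 1) ∧ Set.BijOn φ (ball (0:ℂ) 1) (ball (0:ℂ) 1)
open Topology in
lemma hasFPowerSeriesOnBall_of_hasSum {f : ℂ → ℂ} {c : ℕ → ℂ}
    (hc : ∀ z ∈ ball (0:ℂ) 1, HasSum (fun n : ℕ => c n * z ^ n) (f z)) :
    HasFPowerSeriesOnBall f (FormalMultilinearSeries.ofScalars ℂ c) 0 1 := by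
  refine ⟨?_, one_pos, ?_⟩
  · apply ENNReal.le_of_forall_nnreal_lt
    intro r hr
    have hr1 : (r : ℝ) < 1 := by exact_mod_cast hr
    have hmem : ((r : ℝ) : ℂ) ∈ ball (0:ℂ) 1 := by
      simp only [mem_ball_zero_iff, Complex.norm_real, Real.norm_eq_abs,
        abs_of_nonneg r.coe_nonneg]
      exact hr1
    have hsum := (hc _ hmem).summable
    have htend : Tendsto (fun n : ℕ => ‖c n * ((r : ℝ) : ℂ) ^ n‖) atTop (𝓝 0) := by
      rw [← norm_zero (E := ℂ)]
      exact (hsum.tendsto_atTop_zero).norm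
    apply FormalMultilinearSeries.le_radius_of_tendsto _ (l := 0)
    refine htend.congr fun n => ?_
    rw [norm_mul, norm_pow, Complex.norm_real, Real.norm_eq_abs, abs_of_nonneg r.coe_nonneg,
      FormalMultilinearSeries.ofScalars_norm]
  · intro y hy
    have hy' : y ∈ ball (0:ℂ) 1 := by
      rw [mem_emetric_ball_zero_iff] at hy
      rw [mem_ball_zero_iff]
      rw [← ofReal_norm, ENNReal.ofReal_lt_one] at hy
      exact hy
    have he : (fun n : ℕ => FormalMultilinearSeries.ofScalars ℂ c n fun _ => y)
        = fun n : ℕ => c n * y ^ n := by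
      funext n
      rw [FormalMultilinearSeries.ofScalars_apply_eq, smul_eq_mul]
    rw [he, zero_add]
    exact hc y hy'

open Topology in
lemma taylorCoeff_eq_of_hasSum {f : ℂ → ℂ} {c : ℕ → ℂ}
    (hc : ∀ z ∈ ball (0:ℂ) 1, HasSum (fun n : ℕ => c n * z ^ n) (f z)) (n : ℕ) :
    taylorCoeff f n = c n := by
  have h := (hasFPowerSeriesOnBall_of_hasSum hc).factorial_smul (1:ℂ) n
  rw [FormalMultilinearSeries.ofScalars_apply_eq] at h
  simp only [one_pow, smul_eq_mul, mul_one] at h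
  rw [taylorCoeff, iteratedDeriv_eq_iteratedFDeriv, ← h]
  field_simp [Nat.cast_ne_zero.mpr n.factorial_ne_zero]
  rw [nsmul_eq_mul]

lemma memS2_of_hasSum {f : ℂ → ℂ} {c : ℕ → ℂ}
    (hc : ∀ z ∈ ball (0:ℂ) 1, HasSum (fun n : ℕ => c n * z ^ n) (f z))
    (hs : Summable (fun n : ℕ => ((n : ℝ))^2 * ‖c n‖^2)) :
    MemS2 f := by
  have hco := taylorCoeff_eq_of_hasSum hc
  refine ⟨?_, ?_, ?_⟩
  · have h1 : AnalyticOnNhd ℂ f (Metric.eball (0:ℂ) 1) :=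
      (hasFPowerSeriesOnBall_of_hasSum hc).analyticOnNhd
    have h2 : AnalyticOnNhd ℂ f (ball (0:ℂ) 1) := by
      apply h1.mono
      intro z hz
      rw [mem_ball_zero_iff] at hz
      rw [mem_emetric_ball_zero_iff]
      rw [← ofReal_norm, ENNReal.ofReal_lt_one]
      exact hz
    exact h2.analyticOn
  · intro z hz
    simpa only [hco] using hc z hz
  · simpa only [hco] using hs

open Topology in
lemma eq_on_ball_of_mul {g h q : ℂ → ℂ}
    (hg : AnalyticOnNhd ℂ g (ball (0:ℂ) 1))
    (hgne : ∃ z ∈ ball (0:ℂ) 1, g z ≠ 0)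
    (hh : AnalyticOnNhd ℂ h (ball (0:ℂ) 1))
    (hq : AnalyticOnNhd ℂ q (ball (0:ℂ) 1))
    (heq : ∀ z ∈ ball (0:ℂ) 1, g z * h z = g z * q z) :
    ∀ z ∈ ball (0:ℂ) 1, h z = q z := by
  obtain ⟨z₁, hz₁, hgz₁⟩ := hgne
  have hcont : ContinuousAt g z₁ := (hg z₁ hz₁).continuousAt
  have hev : ∀ᶠ z in 𝓝 z₁, g z ≠ 0 := hcont.eventually_ne hgz₁
  have hball : ∀ᶠ z in 𝓝 z₁, z ∈ ball (0:ℂ) 1 := isOpen_ball.eventually_mem hz₁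
  have hev2 : h =ᶠ[𝓝 z₁] q := by
    filter_upwards [hev, hball] with z hgz hzb
    have := heq z hzb
    exact mul_left_cancel₀ hgz this
  have := hh.eqOn_of_preconnected_of_eventuallyEq hq
    (convex_ball (0:ℂ) 1).isPreconnected hz₁ hev2
  exact fun z hz => this hz

theorem no_isometric_zero_divisors :
    ¬ ∃ g : ℂ → ℂ, MemS2 g ∧
      (¬ ∃ c : ℂ, ∀ z ∈ ball (0:ℂ) 1, g z = c) ∧
      (∃ z ∈ ball (0:ℂ) 1, g z = 0) ∧
      ∀ f : ℂ → ℂ, MemS2 f → (∀ z ∈ ball (0:ℂ) 1, g z = 0 → f z = 0) →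
        ∃ h : ℂ → ℂ, MemS2 h ∧ (∀ z ∈ ball (0:ℂ) 1, f z = g z * h z) ∧
          s2Norm h = s2Norm f := by
  rintro ⟨g, hg, hnc, ⟨z₀, hz₀, hgz₀⟩, H⟩
  set b : ℕ → ℂ := taylorCoeff g with hbdef
  have hgN : AnalyticOnNhd ℂ g (ball (0:ℂ) 1) :=
    (isOpen_ball.analyticOn_iff_analyticOnNhd).1 hg.1
  have hgne : ∃ z ∈ ball (0:ℂ) 1, g z ≠ 0 := by
    by_contra hcon
    push_neg at hcon
    exact hnc ⟨0, fun z hz => hcon z hz⟩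
  -- Step 1: divide g by itself
  obtain ⟨h₁, hh₁, heq₁, hn₁⟩ := H g hg (fun z _ h0 => h0)
  have hh₁N : AnalyticOnNhd ℂ h₁ (ball (0:ℂ) 1) :=
    (isOpen_ball.analyticOn_iff_analyticOnNhd).1 hh₁.1
  have h₁eq : ∀ z ∈ ball (0:ℂ) 1, h₁ z = 1 := by
    refine eq_on_ball_of_mul hgN hgne hh₁N analyticOnNhd_const (fun z hz => ?_)
    rw [mul_one, ← heq₁ z hz]
  have c₁ : ∀ n, taylorCoeff h₁ n = if n = 0 then 1 else 0 := by
    apply taylorCoeff_eq_of_hasSum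
    intro z hz
    rw [h₁eq z hz]
    have he : (fun n : ℕ => (if n = 0 then (1:ℂ) else 0) * z ^ n)
        = fun n : ℕ => if n = 0 then (1:ℂ) else 0 := by
      funext n; cases n <;> simp
    rw [he]
    exact hasSum_ite_eq 0 1
  have hs₁ : s2NormSq h₁ = 1 := by
    rw [s2NormSq]
    simp [c₁]
  have hgnorm : s2NormSq g = 1 := by
    apply Real.sqrt_eq_one.mp
    show s2Norm g = 1
    rw [← hn₁, s2Norm, hs₁, Real.sqrt_one]
  -- Summability facts
  have Sg : Summable (fun n : ℕ => ((n:ℝ))^2 * ‖b n‖^2) := hg.2.2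
  have S1 : Summable (fun n : ℕ => ((n:ℝ)+1)^2 * ‖b (n+1)‖^2) := by
    have h := (summable_nat_add_iff (f := fun n : ℕ => ((n:ℝ))^2 * ‖b n‖^2) 1).2 Sg
    exact h.congr fun n => by push_cast; ring
  have Sb : Summable (fun n : ℕ => ‖b n‖^2) := by
    have h1 : Summable (fun n : ℕ => ‖b (n+1)‖^2) := by
      refine S1.of_nonneg_of_le (fun n => sq_nonneg _) (fun n => ?_)
      have h1 : (1:ℝ) ≤ ((n:ℝ)+1)^2 := by nlinarith [Nat.cast_nonneg (α := ℝ) n]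
      nlinarith [mul_le_mul_of_nonneg_right h1 (sq_nonneg ‖b (n+1)‖)]
    exact (summable_nat_add_iff 1).1 h1
  have SA : Summable (fun n : ℕ => ((n:ℝ)+1)^2 * ‖b n‖^2) := by
    refine Summable.of_nonneg_of_le (fun n => by positivity) (fun n => ?_)
      ((Sg.mul_left 2).add (Sb.mul_left 2))
    nlinarith [sq_nonneg ((n:ℝ)-1), sq_nonneg ‖b n‖, sq_nonneg (((n:ℝ)-1) * ‖b n‖)]
  have S2 : Summable (fun n : ℕ => ((n:ℝ)+2)^2 * ‖b (n+1)‖^2) := by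
    refine Summable.of_nonneg_of_le (fun n => by positivity) (fun n => ?_) (S1.mul_left 4)
    nlinarith [sq_nonneg ‖b (n+1)‖, Nat.cast_nonneg (α := ℝ) n, sq_nonneg ((n:ℝ) * ‖b (n+1)‖)]
  have S3 : Summable (fun n : ℕ => (2*(n:ℝ)+3) * ‖b (n+1)‖^2) := by
    refine Summable.of_nonneg_of_le (fun n => by positivity) (fun n => ?_) S2
    nlinarith [sq_nonneg ‖b (n+1)‖, Nat.cast_nonneg (α := ℝ) n,
      sq_nonneg ((n:ℝ) * ‖b (n+1)‖), sq_nonneg (((n:ℝ)+1) * ‖b (n+1)‖)]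
  -- Step 2: divide z * g z by g
  set c₂ : ℕ → ℂ := fun n => if n = 0 then 0 else b (n-1) with hc₂def
  have hc₂succ : ∀ n, c₂ (n+1) = b n := fun n => by simp [hc₂def]
  have hc₂0 : c₂ 0 = 0 := by simp [hc₂def]
  have hf₂sum : ∀ z ∈ ball (0:ℂ) 1, HasSum (fun n : ℕ => c₂ n * z ^ n) (z * g z) := by
    intro z hz
    have h := (hg.2.1 z hz).mul_left z
    have h' : HasSum (fun n : ℕ => c₂ (n+1) * z ^ (n+1)) (z * g z) := by
      have he : (fun n : ℕ => c₂ (n+1) * z ^ (n+1)) = fun n : ℕ => z * (b n * z ^ n) := by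
        funext n; rw [hc₂succ]; ring
      rw [he]; exact h
    have := (hasSum_nat_add_iff (f := fun n : ℕ => c₂ n * z ^ n) 1).1 h'
    simpa [hc₂0] using this
  have hf₂ : MemS2 (fun z => z * g z) := by
    refine memS2_of_hasSum hf₂sum ?_
    have h1 : Summable (fun n : ℕ => ((↑(n+1):ℝ))^2 * ‖c₂ (n+1)‖^2) :=
      SA.congr fun n => by rw [hc₂succ]; push_cast; ring
    exact (summable_nat_add_iff 1).1 h1
  obtain ⟨h₂, hh₂, heq₂, hn₂⟩ := H _ hf₂ (fun z hz h0 => by rw [h0, mul_zero])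
  have hh₂N : AnalyticOnNhd ℂ h₂ (ball (0:ℂ) 1) :=
    (isOpen_ball.analyticOn_iff_analyticOnNhd).1 hh₂.1
  have h₂eq : ∀ z ∈ ball (0:ℂ) 1, h₂ z = z := by
    refine eq_on_ball_of_mul hgN hgne hh₂N analyticOnNhd_id (fun z hz => ?_)
    rw [← heq₂ z hz]; ring
  have c₂' : ∀ n, taylorCoeff h₂ n = if n = 1 then 1 else 0 := by
    apply taylorCoeff_eq_of_hasSum
    intro z hz
    rw [h₂eq z hz]
    have he : (fun n : ℕ => (if n = 1 then (1:ℂ) else 0) * z ^ n)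
        = fun n : ℕ => if n = 1 then z else 0 := by
      funext n; split_ifs with h <;> simp [h]
    rw [he]
    exact hasSum_ite_eq 1 z
  have hs₂ : s2NormSq h₂ = 1 := by
    rw [s2NormSq]
    have ht : (fun n : ℕ => ((n:ℝ)+1)^2 * ‖taylorCoeff h₂ (n+1)‖^2)
        = fun n : ℕ => if n = 0 then (1:ℝ) else 0 := by
      funext n; rw [c₂']; cases n <;> simp
    rw [ht, c₂', tsum_ite_eq]
    norm_num
  have hf₂norm : s2NormSq (fun z => z * g z) = 1 := by
    apply Real.sqrt_eq_one.mp
    show s2Norm (fun z => z * g z) = 1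
    rw [← hn₂, s2Norm, hs₂, Real.sqrt_one]
  have hfc := taylorCoeff_eq_of_hasSum hf₂sum
  -- extract the two norm identities
  have Ef : ∑' n : ℕ, ((n:ℝ)+1)^2 * ‖b n‖^2 = 1 := by
    rw [s2NormSq] at hf₂norm
    simp only [hfc, hc₂0, norm_zero] at hf₂norm
    have ht : (fun n : ℕ => ((n:ℝ)+1)^2 * ‖c₂ (n+1)‖^2)
        = fun n : ℕ => ((n:ℝ)+1)^2 * ‖b n‖^2 := by
      funext n; rw [hc₂succ]
    rw [ht] at hf₂norm
    calc ∑' n : ℕ, ((n:ℝ)+1)^2 * ‖b n‖^2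
        = 0 ^ 2 + ∑' n : ℕ, ((n:ℝ)+1)^2 * ‖b n‖^2 := by ring
      _ = 1 := hf₂norm
  have Eg : ‖b 0‖^2 + ∑' n : ℕ, ((n:ℝ)+1)^2 * ‖b (n+1)‖^2 = 1 := by
    rw [s2NormSq] at hgnorm
    exact hgnorm
  -- split off the first term of Ef
  have Ef' : ‖b 0‖^2 + ∑' n : ℕ, ((n:ℝ)+2)^2 * ‖b (n+1)‖^2 = 1 := by
    rw [SA.tsum_eq_zero_add] at Ef
    have ht : (fun n : ℕ => ((↑(n+1):ℝ)+1)^2 * ‖b (n+1)‖^2)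
        = fun n : ℕ => ((n:ℝ)+2)^2 * ‖b (n+1)‖^2 := by
      funext n; push_cast; ring
    rw [ht] at Ef
    simpa using Ef
  have key2 : ∑' n : ℕ, ((n:ℝ)+2)^2 * ‖b (n+1)‖^2
      = ∑' n : ℕ, ((n:ℝ)+1)^2 * ‖b (n+1)‖^2 + ∑' n : ℕ, (2*(n:ℝ)+3) * ‖b (n+1)‖^2 := by
    rw [← S1.tsum_add S3]
    exact tsum_congr fun n => by ring
  have hzero : ∑' n : ℕ, (2*(n:ℝ)+3) * ‖b (n+1)‖^2 = 0 := by linarith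
  have hbz : ∀ n, b (n+1) = 0 := by
    intro n
    have hle := S3.le_tsum n (fun m _ => by positivity)
    rw [hzero] at hle
    have h0 : (2*(n:ℝ)+3) * ‖b (n+1)‖^2 = 0 := le_antisymm hle (by positivity)
    have hne : (2*(n:ℝ)+3) ≠ 0 := by positivity
    have h2 : ‖b (n+1)‖^2 = 0 := by
      rcases mul_eq_zero.mp h0 with h | h
      · exact absurd h hne
      · exact h
    simpa using h2
  -- conclude g is constant
  apply hnc
  refine ⟨b 0, fun z hz => ?_⟩
  have h := hg.2.1 z hz
  have h' : HasSum (fun n : ℕ => b n * z ^ n) (b 0) := by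
    have he : (fun n : ℕ => b n * z ^ n) = fun n : ℕ => if n = 0 then b 0 else 0 := by
      funext n
      cases n with
      | zero => simp
      | succ m => simp [hbz m]
    rw [he]
    exact hasSum_ite_eq 0 (b 0)
  exact h.unique h'
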